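/- Define the Frank-Wolfe gap g_t = ⟨∇U(a^{(t)}), s^{(t)} − a^{(t)}⟩. For the Frank-Wolfe iterates with step size γ_t = 2/(t+2) and for every t ≥ 2, there exists an index k with 1 ≤ k ≤ t such that g_k ≤ 2βC/(t+2), where β = 27/8; equivalently, min_{1 ≤ k ≤ t} g_k ≤ 27C/(4(t+2)). -/

import Mathlib

open scoped RealInnerProductSpace
open Filter Finset

private lemma grad_ineq {d : ℕ} {M : Set (EuclideanSpace ℝ (Fin d))}     {U : EuclideanSpace ℝ (Fin d) → ℝ} (hU : ContDiff ℝ 1 U) (hconc : ConcaveOn ℝ M U)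
    {x y : EuclideanSpace ℝ (Fin d)} (hx : x ∈ M) (hy : y ∈ M) :
    U y - U x ≤ ⟪gradient U x, y - x⟫ := by
  have hdiff : DifferentiableAt ℝ U x := (hU.differentiable one_ne_zero).differentiableAt
  have hgrad := hdiff.hasGradientAt
  have hfd : HasFDerivAt U ((InnerProductSpace.toDual ℝ _) (gradient U x)) x :=
    hasGradientAt_iff_hasFDerivAt.mp hgrad
  have hL : ∀ t : ℝ, HasDerivAt (fun t : ℝ => x + t • (y - x)) (y - x) t := by
    intro t
    simpa using ((hasDerivAt_id t).smul_const (y - x)).const_add x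
  have hphi : HasDerivAt (fun t : ℝ => U (x + t • (y - x))) ⟪gradient U x, y - x⟫ 0 := by
    have hfd' : HasFDerivAt U ((InnerProductSpace.toDual ℝ _) (gradient U x)) (x + (0:ℝ) • (y-x)) := by simpa using hfd
    have := hfd'.comp_hasDerivAt (x := (0:ℝ)) (hL 0)
    simpa only [Function.comp_def, InnerProductSpace.toDual_apply_apply] using this
  -- slope bound
  have hslope := hphi.tendsto_slope_zero
  have hmono : Tendsto (fun t : ℝ => t⁻¹ • (U (x + (0 + t) • (y - x)) - U (x + (0:ℝ) • (y - x))))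
      (nhdsWithin 0 (Set.Ioi 0)) (nhds ⟪gradient U x, y - x⟫) := by
    exact hslope.mono_left (nhdsWithin_mono _ (fun t ht => Set.mem_compl_singleton_iff.mpr (ne_of_gt ht)))
  refine ge_of_tendsto hmono ?_
  filter_upwards [Ioc_mem_nhdsGT_of_mem (by norm_num : (0:ℝ) ∈ Set.Ico (0:ℝ) 1)] with t ht
  obtain ⟨ht0, ht1⟩ := ht
  have hcomb : x + t • (y - x) = (1 - t) • x + t • y := by
    module
  have hcc := hconc.2 hx hy (by linarith : (0:ℝ) ≤ 1 - t) (le_of_lt ht0) (by ring)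
  rw [smul_eq_mul, smul_eq_mul] at hcc
  have : t * (U y - U x) ≤ U (x + t • (y - x)) - U x := by
    rw [hcomb]; nlinarith [hcc]
  simp only [zero_add, zero_smul, add_zero, smul_eq_mul]
  rw [← mul_le_mul_iff_right₀ ht0, ← mul_assoc, mul_inv_cancel₀ (ne_of_gt ht0), one_mul]
  linarith

private lemma fw_even (m C : ℝ) (hm : 1 ≤ m) (hC : 0 ≤ C) :
    2*C/(m+2) + C/2 * (4/(m+1) - 4/(2*m+2)) ≤ 2*(27/8)*C/(2*m+2) * ((2*m+1-m) * (2/(2*m+2))) := by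
  have hm0 : (0:ℝ) ≤ m := by linarith
  have eqL : 2*C/(m+2) + C/2 * (4/(m+1) - 4/(2*m+2)) = 2*C*(3*m+4)/((m+2)*(2*m+2)) := by
    have d1 : (m:ℝ)+1 ≠ 0 := by positivity
    have d2 : (m:ℝ)+2 ≠ 0 := by positivity
    have d3 : 2*(m:ℝ)+2 ≠ 0 := by positivity
    field_simp
    ring
  have eqR : 2*(27/8)*C/(2*m+2) * ((2*m+1-m) * (2/(2*m+2))) = (27/2)*C*(m+1)/((2*m+2)^2) := by
    have d3 : 2*(m:ℝ)+2 ≠ 0 := by positivity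
    field_simp
    ring
  rw [eqL, eqR, div_le_div_iff₀ (by positivity) (by positivity)]
  nlinarith [mul_nonneg hC hm0, mul_nonneg (mul_nonneg hC hm0) hm0,
    mul_nonneg (mul_nonneg (mul_nonneg hC hm0) hm0) hm0]

private lemma fw_odd (m C : ℝ) (hm : 1 ≤ m) (hC : 0 ≤ C) :
    2*C/(m+2) + C/2 * (4/(m+1) - 4/(2*m+1+2))
      ≤ 2*(27/8)*C/(2*m+1+2) * ((2*m+1+1-m) * (2/(2*m+1+2))) := by
  have hm0 : (0:ℝ) ≤ m := by linarith
  have eqL : 2*C/(m+2) + C/2 * (4/(m+1) - 4/(2*m+1+2))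
      = (2*C*(m+1)*(2*m+3) + 2*C*(m+2)^2)/((m+1)*(m+2)*(2*m+3)) := by
    have d1 : (m:ℝ)+1 ≠ 0 := by positivity
    have d2 : (m:ℝ)+2 ≠ 0 := by positivity
    have d3 : 2*(m:ℝ)+3 ≠ 0 := by positivity
    field_simp
    ring
  have eqR : 2*(27/8)*C/(2*m+1+2) * ((2*m+1+1-m) * (2/(2*m+1+2))) = (27/2)*C*(m+2)/((2*m+3)^2) := by
    have d3 : 2*(m:ℝ)+3 ≠ 0 := by positivity
    field_simp
    ring
  rw [eqL, eqR, div_le_div_iff₀ (by positivity) (by positivity)]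
  nlinarith [mul_nonneg hC hm0, mul_nonneg (mul_nonneg hC hm0) hm0,
    mul_nonneg (mul_nonneg (mul_nonneg hC hm0) hm0) hm0,
    mul_nonneg (mul_nonneg (mul_nonneg (mul_nonneg hC hm0) hm0) hm0) hm0]


set_option maxHeartbeats 1000000 in
/-- For the Frank-Wolfe iterates with step size γ_t = 2/(t+2) and
Frank-Wolfe gap g_t = ⟪∇U(a^{(t)}), s^{(t)} − a^{(t)}⟫, for every t ≥ 2 there exists
an index k with 1 ≤ k ≤ t such that g_k ≤ 2βC/(t+2), where β = 27/8. -/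
theorem stmt_11 (d : ℕ) (M : Set (EuclideanSpace ℝ (Fin d)))
    (hMne : M.Nonempty) (hMconv : Convex ℝ M) (hMcomp : IsCompact M)
    (U : EuclideanSpace ℝ (Fin d) → ℝ) (hU : ContDiff ℝ 1 U)
    (hconc : ConcaveOn ℝ M U) (C : ℝ) (hC : 0 ≤ C)
    (hcurv : ∀ x ∈ M, ∀ s ∈ M, ∀ γ ∈ Set.Icc (0 : ℝ) 1,
      U x + γ * ⟪gradient U x, s - x⟫ - γ ^ 2 / 2 * C ≤ U (x + γ • (s - x)))
    (a s : ℕ → EuclideanSpace ℝ (Fin d)) (ha0 : a 0 ∈ M)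
    (hsM : ∀ t, s t ∈ M)
    (hsmax : ∀ t, ∀ x ∈ M, ⟪gradient U (a t), x⟫ ≤ ⟪gradient U (a t), s t⟫)
    (hupd : ∀ t : ℕ, a (t + 1) = a t + (2 / ((t : ℝ) + 2)) • (s t - a t)) :
    ∀ t : ℕ, 2 ≤ t → ∃ k : ℕ, 1 ≤ k ∧ k ≤ t ∧
      ⟪gradient U (a k), s k - a k⟫ ≤ 2 * (27 / 8) * C / ((t : ℝ) + 2) := by
  set γ : ℕ → ℝ := fun k => 2 / ((k : ℝ) + 2) with hγ
  have hγpos : ∀ k, 0 < γ k := by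
    intro k; apply div_pos two_pos; positivity
  have hγle1 : ∀ k, γ k ≤ 1 := by
    intro k
    rw [hγ, div_le_one (by positivity)]
    have : (0:ℝ) ≤ (k:ℝ) := Nat.cast_nonneg k
    linarith
  -- membership
  have haM : ∀ k, a k ∈ M := by
    intro k
    induction k with
    | zero => exact ha0
    | succ n ih =>
      rw [hupd n]
      have hcomb : a n + γ n • (s n - a n) = (1 - γ n) • a n + γ n • s n := by module
      rw [show (2 / ((n : ℝ) + 2)) = γ n from rfl, hcomb]
      exact hMconv ih (hsM n) (by linarith [hγle1 n]) (le_of_lt (hγpos n)) (by ring)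
  -- gap
  set g : ℕ → ℝ := fun k => ⟪gradient U (a k), s k - a k⟫ with hg
  -- descent
  have hdesc : ∀ k, U (a k) + γ k * g k - (γ k) ^ 2 / 2 * C ≤ U (a (k + 1)) := by
    intro k
    have := hcurv (a k) (haM k) (s k) (hsM k) (γ k) ⟨(hγpos k).le, hγle1 k⟩
    rw [hupd k]; exact this
  -- maximizer
  obtain ⟨xs, hxsM, hxsmax⟩ := hMcomp.exists_isMaxOn hMne (hU.continuous.continuousOn)
  set h : ℕ → ℝ := fun k => U xs - U (a k) with hh
  have hh0 : ∀ k, 0 ≤ h k := fun k => sub_nonneg.mpr (hxsmax (haM k))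
  have hgh : ∀ k, h k ≤ g k := by
    intro k
    have h1 : U xs - U (a k) ≤ ⟪gradient U (a k), xs - a k⟫ := grad_ineq hU hconc (haM k) hxsM
    have h2 : ⟪gradient U (a k), xs - a k⟫ ≤ ⟪gradient U (a k), s k - a k⟫ := by
      rw [inner_sub_right, inner_sub_right]
      have := hsmax k xs hxsM
      linarith
    exact le_trans h1 h2
  have hg0 : ∀ k, 0 ≤ g k := fun k => le_trans (hh0 k) (hgh k)
  -- recursion
  have hrec : ∀ k, h (k + 1) ≤ (1 - γ k) * h k + (γ k) ^ 2 / 2 * C := by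
    intro k
    have h1 := hdesc k
    have h2 := mul_le_mul_of_nonneg_left (hgh k) (hγpos k).le
    have e1 : h (k+1) = U xs - U (a (k+1)) := rfl
    have e2 : h k = U xs - U (a k) := rfl
    rw [e1, e2]
    rw [e2] at h2
    linarith
  -- h bound
  have hE : ∀ k, 1 ≤ k → h k ≤ 2 * C / ((k : ℝ) + 2) := by
    intro k hk
    induction k with
    | zero => omega
    | succ n ih =>
      rcases Nat.eq_or_lt_of_le hk with heq | hlt
      · -- n + 1 = 1, n = 0
        have hn : n = 0 := by omega
        subst hn
        have := hrec 0
        have hγ0 : γ 0 = 1 := by rw [hγ]; norm_num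
        rw [hγ0] at this
        push_cast
        nlinarith [hh0 1]
      · have hn1 : 1 ≤ n := by omega
        have ihn := ih hn1
        have := hrec n
        have hnr : (0:ℝ) ≤ (n:ℝ) := Nat.cast_nonneg n
        have hγn : γ n = 2 / ((n:ℝ) + 2) := rfl
        rw [hγn] at this
        have hb : (1 - 2 / ((n:ℝ) + 2)) * h n + (2 / ((n:ℝ)+2)) ^ 2 / 2 * C
            ≤ (1 - 2 / ((n:ℝ) + 2)) * (2 * C / ((n:ℝ)+2)) + (2 / ((n:ℝ)+2)) ^ 2 / 2 * C := by
          have h1 : 0 ≤ 1 - 2 / ((n:ℝ) + 2) := by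
            rw [sub_nonneg, div_le_one (by positivity)]; linarith
          nlinarith [ihn]
        have hc : (1 - 2 / ((n:ℝ) + 2)) * (2 * C / ((n:ℝ)+2)) + (2 / ((n:ℝ)+2)) ^ 2 / 2 * C
            ≤ 2 * C / ((n:ℝ) + 3) := by
          have e1 : (0:ℝ) < (n:ℝ) + 2 := by positivity
          have e2 : (0:ℝ) < (n:ℝ) + 3 := by positivity
          have key : (1 - 2 / ((n:ℝ)+2)) * (2 * C / ((n:ℝ)+2)) + (2 / ((n:ℝ)+2)) ^ 2 / 2 * C
              = 2 * C * ((n:ℝ)+1) / ((n:ℝ)+2)^2 := by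
            field_simp
            ring
          rw [key, div_le_div_iff₀ (by positivity) (by positivity)]
          nlinarith [mul_nonneg hnr hC]
        push_cast
        calc h (n+1) ≤ (1 - 2 / ((n:ℝ) + 2)) * h n + (2 / ((n:ℝ)+2)) ^ 2 / 2 * C := this
          _ ≤ _ := hb
          _ ≤ 2 * C / ((n:ℝ) + 3) := hc
          _ = 2 * C / ((n:ℝ) + 1 + 2) := by ring_nf
  -- main
  intro t ht
  by_contra hcon
  push_neg at hcon
  set B : ℝ := 2 * (27 / 8) * C / ((t : ℝ) + 2) with hB
  have hgB : ∀ k, 1 ≤ k → k ≤ t → B < g k := fun k h1 h2 => (hcon k h1 h2)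
  set K : ℕ := t / 2 with hK
  have hK1 : 1 ≤ K := by omega
  have hKt : K ≤ t := by omega
  have hne : (Finset.Icc K t).Nonempty := Finset.nonempty_Icc.mpr hKt
  -- telescoping sum of U
  have htel : ∑ k ∈ Finset.Icc K t, (U (a (k+1)) - U (a k)) = U (a (t+1)) - U (a K) := by
    rw [← Finset.Ico_add_one_right_eq_Icc, Finset.sum_Ico_eq_sub _ (by omega : K ≤ t + 1),
      Finset.sum_range_sub (fun k => U (a k)), Finset.sum_range_sub (fun k => U (a k))]
    ring
  have hsum1 : ∑ k ∈ Finset.Icc K t, (γ k * g k)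
      ≤ (U (a (t+1)) - U (a K)) + ∑ k ∈ Finset.Icc K t, ((γ k)^2 / 2 * C) := by
    rw [← htel, ← Finset.sum_add_distrib]
    apply Finset.sum_le_sum
    intro k _
    have := hdesc k
    linarith
  have hsum2 : U (a (t+1)) - U (a K) ≤ h K := by
    have := hxsmax (haM (t+1))
    simp only [hh]
    simp only [Set.mem_setOf_eq] at this ⊢
    linarith [hxsmax (haM (t+1))]
  -- strict lower bound
  have hstrict : ∑ k ∈ Finset.Icc K t, (γ k * B) < ∑ k ∈ Finset.Icc K t, (γ k * g k) := by
    apply Finset.sum_lt_sum_of_nonempty hne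
    intro k hk
    rw [Finset.mem_Icc] at hk
    exact mul_lt_mul_of_pos_left (hgB k (le_trans hK1 hk.1) hk.2) (hγpos k)
  -- card
  have hcard : (Finset.Icc K t).card = t + 1 - K := Nat.card_Icc K t
  have hcardR : ((Finset.Icc K t).card : ℝ) = (t:ℝ) + 1 - (K:ℝ) := by
    rw [hcard]; push_cast [Nat.cast_sub (by omega : K ≤ t + 1)]; ring
  -- S1 lower bound
  have hS1 : ((t:ℝ) + 1 - (K:ℝ)) * (2 / ((t:ℝ)+2)) ≤ ∑ k ∈ Finset.Icc K t, γ k := by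
    rw [← hcardR]
    have := Finset.card_nsmul_le_sum (Finset.Icc K t) γ (2 / ((t:ℝ)+2)) ?_
    · simpa [nsmul_eq_mul] using this
    · intro k hk
      rw [Finset.mem_Icc] at hk
      show 2 / ((t:ℝ) + 2) ≤ 2 / ((k:ℝ) + 2)
      have hkt : (k:ℝ) ≤ (t:ℝ) := by exact_mod_cast hk.2
      apply div_le_div_of_nonneg_left (by norm_num) (by positivity)
      linarith
  -- S2 upper bound
  have hS2 : ∑ k ∈ Finset.Icc K t, (γ k)^2 ≤ 4 / ((K:ℝ)+1) - 4 / ((t:ℝ)+2) := by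
    have hterm : ∀ k ∈ Finset.Icc K t, (γ k)^2 ≤ 4 / ((k:ℝ)+1) - 4 / (((k:ℝ)+1)+1) := by
      intro k _
      have h1 : (0:ℝ) < (k:ℝ) + 1 := by positivity
      have h2 : (0:ℝ) < (k:ℝ) + 2 := by positivity
      show (2 / ((k:ℝ) + 2))^2 ≤ 4 / ((k:ℝ)+1) - 4 / (((k:ℝ)+1)+1)
      rw [div_pow, div_sub_div _ _ (by positivity) (by positivity),
        div_le_div_iff₀ (by positivity) (by positivity)]
      ring_nf
      nlinarith [(Nat.cast_nonneg k : (0:ℝ) ≤ (k:ℝ))]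
    calc ∑ k ∈ Finset.Icc K t, (γ k)^2
        ≤ ∑ k ∈ Finset.Icc K t, (4 / ((k:ℝ)+1) - 4 / (((k:ℝ)+1)+1)) := Finset.sum_le_sum hterm
      _ = 4 / ((K:ℝ)+1) - 4 / ((t:ℝ)+2) := by
          have hrange : ∀ n : ℕ, ∑ k ∈ Finset.range n, (4 / ((k:ℝ)+1) - 4 / (((k:ℝ)+1)+1))
              = 4 / ((0:ℝ)+1) - 4 / ((n:ℝ)+1) := by
            intro n
            induction n with
            | zero => simp
            | succ p ihp => rw [Finset.sum_range_succ, ihp]; push_cast; ring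
          rw [← Finset.Ico_add_one_right_eq_Icc, Finset.sum_Ico_eq_sub _ (by omega : K ≤ t + 1),
            hrange, hrange]
          push_cast
          ring
  -- combine
  have hfact : ∑ k ∈ Finset.Icc K t, (γ k * B) = B * ∑ k ∈ Finset.Icc K t, γ k := by
    rw [Finset.mul_sum]; congr 1; ext k; ring
  have hfact2 : ∑ k ∈ Finset.Icc K t, ((γ k)^2 / 2 * C) = (C/2) * ∑ k ∈ Finset.Icc K t, (γ k)^2 := by
    rw [Finset.mul_sum]; congr 1; ext k; ring
  have hB0 : 0 ≤ B := by rw [hB]; positivity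
  have hchain : B * (((t:ℝ) + 1 - (K:ℝ)) * (2 / ((t:ℝ)+2)))
      < 2 * C / ((K:ℝ)+2) + (C/2) * (4 / ((K:ℝ)+1) - 4 / ((t:ℝ)+2)) := by
    have e1 := mul_le_mul_of_nonneg_left hS1 hB0
    have e2 : (C/2) * ∑ k ∈ Finset.Icc K t, (γ k)^2 ≤ (C/2) * (4 / ((K:ℝ)+1) - 4 / ((t:ℝ)+2)) :=
      mul_le_mul_of_nonneg_left hS2 (by positivity)
    have e3 := hE K hK1
    calc B * (((t:ℝ) + 1 - (K:ℝ)) * (2 / ((t:ℝ)+2)))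
        ≤ B * ∑ k ∈ Finset.Icc K t, γ k := e1
      _ = ∑ k ∈ Finset.Icc K t, (γ k * B) := hfact.symm
      _ < ∑ k ∈ Finset.Icc K t, (γ k * g k) := hstrict
      _ ≤ (U (a (t+1)) - U (a K)) + ∑ k ∈ Finset.Icc K t, ((γ k)^2 / 2 * C) := hsum1
      _ ≤ h K + (C/2) * (4 / ((K:ℝ)+1) - 4 / ((t:ℝ)+2)) := by rw [hfact2]; exact add_le_add hsum2 e2
      _ ≤ 2 * C / ((K:ℝ)+2) + (C/2) * (4 / ((K:ℝ)+1) - 4 / ((t:ℝ)+2)) := by linarith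
  -- final numeric contradiction, by parity
  rw [hB] at hchain
  rcases Nat.even_or_odd t with ⟨m, hm⟩ | ⟨m, hm⟩
  · have hKm : K = m := by omega
    have hm1 : 1 ≤ m := by omega
    have hmr : (1:ℝ) ≤ (m:ℝ) := by exact_mod_cast hm1
    have htr : (t:ℝ) = 2 * (m:ℝ) := by rw [hm]; push_cast; ring
    rw [hKm, htr] at hchain
    have hm0 : (0:ℝ) ≤ (m:ℝ) := by linarith
    have := fw_even (m:ℝ) C hmr hC
    linarith
  · have hKm : K = m := by omega
    have hm1 : 1 ≤ m := by omega
    have hmr : (1:ℝ) ≤ (m:ℝ) := by exact_mod_cast hm1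
    have htr : (t:ℝ) = 2 * (m:ℝ) + 1 := by rw [hm]; push_cast; ring
    rw [hKm, htr] at hchain
    have hm0 : (0:ℝ) ≤ (m:ℝ) := by linarith
    have := fw_odd (m:ℝ) C hmr hC
    linarith
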